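/- Define f : closed unit disk → closed unit disk by f(z) = (e² z)/(e²|z| - |z| + 1) · e^{2πi ξ(|z|/(1-|z|))} for 0 < |z| < 1 and f(z) = z for |z| = 0 or |z| = 1. Then f is a homeomorphism of the closed unit disk. -/

import Mathlib

open Filter

/-- The function ξ from the paper. -/
noncomputable def xi (r : ℝ) : ℝ :=
  if r ≤ 1 then 0
  else
    if Even ⌊Real.log r⌋ then
      (Real.log r - (⌊Real.log r⌋ : ℝ)) /
        (2 : ℝ) ^ (⌊Real.logb 2 (((⌊Real.log r / 2⌋ + 1 : ℤ) : ℝ))⌋)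
    else
      (1 - (Real.log r - (⌊Real.log r⌋ : ℝ))) /
        (2 : ℝ) ^ (⌊Real.logb 2 (((⌊Real.log r / 2⌋ + 1 : ℤ) : ℝ))⌋)

/-- The map f from the paper, as a map of ℂ (it preserves the closed unit disk). -/
noncomputable def fMap (z : ℂ) : ℂ :=
  if ‖z‖ = 0 ∨ ‖z‖ = 1 then z
  else (Real.exp 2 : ℂ) * z / ((Real.exp 2 * ‖z‖ - ‖z‖ + 1 : ℝ) : ℂ) *
    Complex.exp (2 * Real.pi * Complex.I * xi (‖z‖ / (1 - ‖z‖)))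

noncomputable def wtri (t : ℝ) : ℝ := 1 - |2 * Int.fract (t/2) - 1|
noncomputable def dden (t : ℝ) : ℝ := (2:ℝ) ^ (⌊Real.logb 2 (((⌊t/2⌋ + 1 : ℤ) : ℝ))⌋)
noncomputable def Phi (t : ℝ) : ℝ := if t ≤ 0 then 0 else wtri t / dden t

lemma wtri_cont : Continuous wtri := by
  have h : Continuous ((fun x : ℝ => 1 - |2 * x - 1|) ∘ Int.fract) := by
    apply ContinuousOn.comp_fract''
    · fun_prop
    · norm_num
  have : wtri = (fun x : ℝ => 1 - |2 * x - 1|) ∘ Int.fract ∘ (fun t => t/2) := rfl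
  rw [this]
  exact h.comp (by fun_prop)

lemma wtri_nonneg (t : ℝ) : 0 ≤ wtri t := by
  have h := Int.fract_nonneg t
  have h1 : |2 * Int.fract (t/2) - 1| ≤ 1 := by
    have := Int.fract_nonneg (t/2); have := Int.fract_lt_one (t/2)
    rw [abs_le]; constructor <;> linarith
  simp [wtri]; linarith

lemma wtri_le_one (t : ℝ) : wtri t ≤ 1 := by
  have : 0 ≤ |2 * Int.fract (t/2) - 1| := abs_nonneg _
  unfold wtri; linarith

lemma dden_pos (t : ℝ) : 0 < dden t := zpow_pos (by norm_num) _

lemma dden_ge_one (t : ℝ) (ht : 0 ≤ t) : 1 ≤ dden t := by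
  have h1 : (0:ℤ) ≤ ⌊t/2⌋ := Int.floor_nonneg.2 (by linarith)
  have h2 : (1:ℝ) ≤ ((⌊t/2⌋ + 1 : ℤ) : ℝ) := by
    have : (0:ℝ) ≤ ((⌊t/2⌋:ℤ):ℝ) := by exact_mod_cast h1
    push_cast
    linarith
  have h3 : (0:ℤ) ≤ ⌊Real.logb 2 (((⌊t/2⌋ + 1 : ℤ) : ℝ))⌋ := by
    apply Int.floor_nonneg.2
    exact Real.logb_nonneg (by norm_num) h2
  calc (1:ℝ) = 2 ^ (0:ℤ) := by norm_num
  _ ≤ dden t := by apply zpow_le_zpow_right₀ (by norm_num) h3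

lemma floor_half_even {t : ℝ} {k : ℤ} (hk : ⌊t⌋ = 2 * k) : ⌊t/2⌋ = k ∧ Int.fract (t/2) = t/2 - k ∧ t/2 - k < 1/2 := by
  have h1 : ((2*k : ℤ):ℝ) ≤ t := by rw [← hk]; exact Int.floor_le t
  have h2 : t < ((2*k : ℤ):ℝ) + 1 := by rw [← hk]; exact Int.lt_floor_add_one t
  push_cast at h1 h2
  have hf : ⌊t/2⌋ = k := by
    apply Int.floor_eq_iff.2
    constructor
    · push_cast; linarith
    · push_cast; linarith
  refine ⟨hf, ?_, by linarith⟩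
  rw [Int.fract, hf]

lemma floor_half_odd {t : ℝ} {k : ℤ} (hk : ⌊t⌋ = 2 * k + 1) : ⌊t/2⌋ = k ∧ Int.fract (t/2) = t/2 - k ∧ 1/2 ≤ t/2 - k := by
  have h1 : ((2*k+1 : ℤ):ℝ) ≤ t := by rw [← hk]; exact Int.floor_le t
  have h2 : t < ((2*k+1 : ℤ):ℝ) + 1 := by rw [← hk]; exact Int.lt_floor_add_one t
  push_cast at h1 h2
  have hf : ⌊t/2⌋ = k := by
    apply Int.floor_eq_iff.2
    constructor
    · push_cast; linarith
    · push_cast; linarith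
  refine ⟨hf, ?_, by linarith⟩
  rw [Int.fract, hf]

lemma wtri_eq_even {t : ℝ} (h : Even ⌊t⌋) : wtri t = t - ⌊t⌋ := by
  obtain ⟨k, hk⟩ := h
  have hk' : ⌊t⌋ = 2 * k := by omega
  obtain ⟨hf, hfr, hlt⟩ := floor_half_even hk'
  have h1 : ((2*k : ℤ):ℝ) ≤ t := by rw [← hk']; exact Int.floor_le t
  push_cast at h1
  rw [wtri, hfr, hk']
  rw [abs_of_nonpos (by linarith)]
  push_cast
  ring

lemma wtri_eq_odd {t : ℝ} (h : ¬ Even ⌊t⌋) : wtri t = 1 - (t - ⌊t⌋) := by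
  rw [Int.not_even_iff_odd] at h
  obtain ⟨k, hk⟩ := h
  obtain ⟨hf, hfr, hge⟩ := floor_half_odd hk
  have h2 : t < ((2*k+1 : ℤ):ℝ) + 1 := by rw [← hk]; exact Int.lt_floor_add_one t
  push_cast at h2
  rw [wtri, hfr, hk]
  rw [abs_of_nonneg (by linarith)]
  push_cast
  ring

lemma xi_eq_phi {r : ℝ} (hr : 0 ≤ r) : xi r = Phi (Real.log r) := by
  by_cases h : r ≤ 1
  · rw [xi, if_pos h, Phi, if_pos (Real.log_nonpos hr h)]
  · push_neg at h
    have ht : ¬ Real.log r ≤ 0 := by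
      push_neg; exact Real.log_pos h
    rw [Phi, if_neg ht, xi, if_neg (not_le.2 h)]
    unfold dden
    by_cases he : Even ⌊Real.log r⌋
    · rw [if_pos he, wtri_eq_even he]
    · rw [if_neg he, wtri_eq_odd he]

lemma phi_nonneg (t : ℝ) : 0 ≤ Phi t := by
  unfold Phi
  split
  · exact le_refl 0
  · exact div_nonneg (wtri_nonneg t) (dden_pos t).le

lemma phi_le_wtri (t : ℝ) : Phi t ≤ wtri t := by
  unfold Phi
  split
  · exact wtri_nonneg t
  · next h =>
    push_neg at h
    exact div_le_self (wtri_nonneg t) (dden_ge_one t h.le)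

lemma phi_cont : Continuous Phi := by
  rw [continuous_iff_continuousAt]
  intro t
  rcases lt_trichotomy t 0 with h | h | h
  · have : Phi =ᶠ[nhds t] (fun _ => (0:ℝ)) := by
      filter_upwards [Iio_mem_nhds h] with s hs
      simp only [Set.mem_Iio] at hs
      simp only [Phi, if_pos hs.le]
    exact this.continuousAt
  · -- t = 0 : squeeze
    subst h
    have h0 : Phi 0 = 0 := by simp [Phi]
    have hw0 : wtri 0 = 0 := by norm_num [wtri]
    unfold ContinuousAt
    rw [h0]
    apply tendsto_of_tendsto_of_tendsto_of_le_of_le (g := fun _ => (0:ℝ)) (h := wtri)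
      tendsto_const_nhds ?_ (fun s => phi_nonneg s) (fun s => phi_le_wtri s)
    have := wtri_cont.continuousAt (x := (0:ℝ))
    rw [ContinuousAt, hw0] at this
    exact this
  · by_cases hfr : Int.fract (t/2) = 0
    · -- wtri t = 0, squeeze
      have hw0 : wtri t = 0 := by rw [wtri, hfr]; norm_num
      have h0 : Phi t = 0 := by
        rw [Phi, if_neg (not_le.2 h), hw0, zero_div]
      unfold ContinuousAt
      rw [h0]
      apply tendsto_of_tendsto_of_tendsto_of_le_of_le (g := fun _ => (0:ℝ)) (h := wtri)
        tendsto_const_nhds ?_ (fun s => phi_nonneg s) (fun s => phi_le_wtri s)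
      have := wtri_cont.continuousAt (x := t)
      rw [ContinuousAt, hw0] at this
      exact this
    · -- floor locally constant
      set m : ℤ := ⌊t/2⌋ with hm
      have hlt : (m:ℝ) < t/2 := by
        rcases lt_or_eq_of_le (Int.floor_le (t/2)) with h' | h'
        · exact h'
        · exfalso; apply hfr; rw [Int.fract, ← hm, ← h']; ring
      have hlt2 : t/2 < (m:ℝ) + 1 := Int.lt_floor_add_one (t/2)
      have hU : {s : ℝ | (m:ℝ) < s/2 ∧ s/2 < (m:ℝ)+1 ∧ 0 < s} ∈ nhds t := by
        have hop : IsOpen {s : ℝ | (m:ℝ) < s/2 ∧ s/2 < (m:ℝ)+1 ∧ 0 < s} := by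
          apply IsOpen.and (isOpen_lt continuous_const (by fun_prop))
          exact IsOpen.and (isOpen_lt (by fun_prop) continuous_const)
            (isOpen_lt continuous_const continuous_id)
        exact hop.mem_nhds ⟨hlt, hlt2, h⟩
      have heq : Phi =ᶠ[nhds t] (fun s => wtri s / dden t) := by
        filter_upwards [hU] with s hs
        obtain ⟨hs1, hs2, hs3⟩ := hs
        have hfl : ⌊s/2⌋ = m := Int.floor_eq_iff.2 ⟨hs1.le, hs2⟩
        simp only [Phi, if_neg (not_le.2 hs3), dden, hfl, hm]
      exact (((wtri_cont.continuousAt).div continuousAt_const (dden_pos t).ne')).congr heq.symm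

lemma two_zpow_floor_logb {x : ℝ} (hx : 1 ≤ x) : x / 2 ≤ (2:ℝ) ^ (⌊Real.logb 2 x⌋) := by
  have hx0 : 0 < x := by linarith
  have h1 : Real.logb 2 x - 1 ≤ (⌊Real.logb 2 x⌋ : ℝ) := by
    linarith [Int.sub_one_lt_floor (Real.logb 2 x)]
  have h2 : (2:ℝ) ^ (Real.logb 2 x - 1 : ℝ) ≤ (2:ℝ) ^ ((⌊Real.logb 2 x⌋ : ℝ) : ℝ) :=
    Real.rpow_le_rpow_of_exponent_le one_le_two h1
  rw [Real.rpow_sub (by norm_num), Real.rpow_logb (by norm_num) (by norm_num) hx0,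
    Real.rpow_one] at h2
  rw [← Real.rpow_intCast]
  exact h2

lemma phi_le_bound {t : ℝ} (ht : 0 < t) : Phi t ≤ 4 / t := by
  have hd : t / 4 ≤ dden t := by
    have h1 : t/2 ≤ ((⌊t/2⌋ + 1 : ℤ) : ℝ) := by
      push_cast
      linarith [Int.lt_floor_add_one (t/2)]
    have h2 : (1:ℝ) ≤ ((⌊t/2⌋ + 1 : ℤ) : ℝ) := by
      have : (0:ℤ) ≤ ⌊t/2⌋ := Int.floor_nonneg.2 (by linarith)
      exact_mod_cast by omega
    calc t/4 = (t/2)/2 := by ring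
    _ ≤ ((⌊t/2⌋ + 1 : ℤ) : ℝ) / 2 := by linarith
    _ ≤ dden t := two_zpow_floor_logb h2
  have h3 : Phi t ≤ 1 / dden t := by
    rw [Phi, if_neg (not_le.2 ht)]
    gcongr
    · exact (dden_pos t).le
    · exact wtri_le_one t
  have hdpos := dden_pos t
  calc Phi t ≤ 1 / dden t := h3
  _ ≤ 4 / t := by
    rw [div_le_div_iff₀ hdpos ht]
    nlinarith

lemma phi_tendsto_atTop : Filter.Tendsto Phi Filter.atTop (nhds 0) := by
  apply tendsto_of_tendsto_of_tendsto_of_le_of_le' (g := fun _ => (0:ℝ)) (h := fun t => 4/t)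
    tendsto_const_nhds
  · simpa using Filter.Tendsto.const_div_atTop Filter.tendsto_id (4:ℝ)
  · exact Filter.Eventually.of_forall phi_nonneg
  · filter_upwards [Filter.eventually_gt_atTop 0] with t ht
    exact phi_le_bound ht

noncomputable def psi (s : ℝ) : ℝ := xi (s / (1 - s))

lemma xi_nonneg (r : ℝ) : 0 ≤ xi r := by
  rcases le_or_gt 0 r with h | h
  · rw [xi_eq_phi h]; exact phi_nonneg _
  · rw [xi, if_pos (by linarith)]

lemma psi_one : psi 1 = 0 := by
  simp [psi, xi]

lemma psi_contOn : ContinuousOn psi (Set.Icc 0 1) := by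
  intro s hs
  obtain ⟨hs0, hs1⟩ := hs
  rcases eq_or_lt_of_le hs1 with h1 | h1
  · -- s = 1
    subst h1
    rw [← continuousWithinAt_diff_self]
    have hdom : Set.Icc (0:ℝ) 1 \ {1} ⊆ Set.Ico 0 1 := by
      intro u hu
      obtain ⟨⟨hu0, hu1⟩, hu2⟩ := hu
      exact ⟨hu0, lt_of_le_of_ne hu1 (by simpa using hu2)⟩
    apply ContinuousWithinAt.mono _ hdom
    unfold ContinuousWithinAt
    rw [psi_one]
    -- ratio tends to atTop
    have hsub : Tendsto (fun u : ℝ => 1 - u) (nhdsWithin 1 (Set.Ico 0 1)) (nhdsWithin 0 (Set.Ioi 0)) := by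
      apply tendsto_nhdsWithin_of_tendsto_nhds_of_eventually_within
      · have h9 : Tendsto (fun u : ℝ => 1 - u) (nhds 1) (nhds 0) := by
          have h8 := Continuous.tendsto (show Continuous (fun u : ℝ => 1 - u) by fun_prop) 1
          simpa using h8
        exact h9.mono_left nhdsWithin_le_nhds
      · filter_upwards [self_mem_nhdsWithin] with u hu
        simp only [Set.mem_Ioi]
        linarith [hu.2]
    have hinv : Tendsto (fun u : ℝ => (1 - u)⁻¹) (nhdsWithin 1 (Set.Ico 0 1)) atTop :=
      tendsto_inv_nhdsGT_zero.comp hsub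
    have hnum : Tendsto (fun u : ℝ => u) (nhdsWithin 1 (Set.Ico 0 1)) (nhds 1) :=
      tendsto_id.mono_left nhdsWithin_le_nhds
    have hrat : Tendsto (fun u : ℝ => u / (1 - u)) (nhdsWithin 1 (Set.Ico 0 1)) atTop := by
      have := Filter.Tendsto.pos_mul_atTop one_pos hnum hinv
      simpa [div_eq_mul_inv] using this
    have hlog : Tendsto (fun u : ℝ => Real.log (u / (1 - u))) (nhdsWithin 1 (Set.Ico 0 1)) atTop :=
      Real.tendsto_log_atTop.comp hrat
    have hphi : Tendsto (fun u : ℝ => Phi (Real.log (u / (1 - u)))) (nhdsWithin 1 (Set.Ico 0 1)) (nhds 0) :=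
      phi_tendsto_atTop.comp hlog
    apply hphi.congr'
    filter_upwards [self_mem_nhdsWithin] with u hu
    exact (xi_eq_phi (div_nonneg hu.1 (by linarith [hu.2]))).symm
  rcases eq_or_lt_of_le hs0 with h0 | h0
  · -- s = 0 : locally zero within
    subst h0
    apply ContinuousWithinAt.congr_of_eventuallyEq (f := fun _ => (0:ℝ))
      continuousWithinAt_const
    · filter_upwards [mem_nhdsWithin_of_mem_nhds (Iio_mem_nhds (by norm_num : (0:ℝ) < 1/2))] with u hu
      simp only [Set.mem_Iio] at hu
      have : u / (1 - u) ≤ 1 := by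
        rw [div_le_one (by linarith)]
        linarith
      simp [psi, xi, this]
    · simp [psi, xi]
  · -- 0 < s < 1 : via Phi ∘ log ∘ ratio
    apply ContinuousWithinAt.mono (t := Set.Icc 0 1)
    swap; · exact le_refl _
    have hset : {u : ℝ | 0 < u ∧ u < 1} ∈ nhds s := by
      have : IsOpen {u : ℝ | 0 < u ∧ u < 1} :=
        IsOpen.and (isOpen_lt continuous_const continuous_id)
          (isOpen_lt continuous_id continuous_const)
      exact this.mem_nhds ⟨h0, h1⟩
    have heq : psi =ᶠ[nhds s] (fun u => Phi (Real.log (u / (1 - u)))) := by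
      filter_upwards [hset] with u ⟨hu0, hu1⟩
      exact xi_eq_phi (div_nonneg hu0.le (by linarith))
    have hrat : 0 < s / (1 - s) := div_pos h0 (by linarith)
    have hratc : ContinuousAt (fun u : ℝ => u / (1 - u)) s :=
      ContinuousAt.div continuousAt_id (by fun_prop) (by linarith)
    have hlogc : ContinuousAt (fun u : ℝ => Real.log (u / (1 - u))) s := by
      have h' := ContinuousAt.comp (x := s) (f := fun u : ℝ => u / (1 - u))
        (Real.continuousAt_log hrat.ne') hratc
      exact h'
    have hc : ContinuousAt (fun u : ℝ => Phi (Real.log (u / (1 - u)))) s := by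
      have h' := phi_cont.continuousAt.comp hlogc
      exact h'
    exact (hc.congr heq.symm).continuousWithinAt

noncomputable def mu (s : ℝ) : ℝ := Real.exp 2 / ((Real.exp 2 - 1) * s + 1)

noncomputable def cFun (s : ℝ) : ℂ :=
  ((mu s : ℝ) : ℂ) * Complex.exp (2 * Real.pi * Complex.I * xi (s / (1 - s)))

noncomputable def Qinv (t : ℝ) : ℝ := t / (Real.exp 2 - (Real.exp 2 - 1) * t)

lemma exp_two_gt_one : (1:ℝ) < Real.exp 2 := by
  have := Real.add_one_lt_exp (by norm_num : (2:ℝ) ≠ 0)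
  linarith

lemma denom_pos {s : ℝ} (hs : 0 ≤ s) : 0 < (Real.exp 2 - 1) * s + 1 := by
  have h := exp_two_gt_one
  nlinarith

lemma mu_pos {s : ℝ} (hs : 0 ≤ s) : 0 < mu s :=
  div_pos (Real.exp_pos 2) (denom_pos hs)

lemma qdenom_pos {t : ℝ} (ht : t ≤ 1) : 0 < Real.exp 2 - (Real.exp 2 - 1) * t := by
  have h := exp_two_gt_one
  nlinarith

lemma abs_cFun {s : ℝ} (hs : 0 ≤ s) : ‖cFun s‖ = mu s := by
  rw [cFun, norm_mul, Complex.norm_exp]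
  have h1 : (2 * (Real.pi:ℂ) * Complex.I * ((xi (s / (1 - s)) : ℝ):ℂ)).re = 0 := by
    simp [Complex.mul_re, Complex.mul_im]
  rw [h1, Real.exp_zero, Complex.norm_real, Real.norm_of_nonneg (mu_pos hs).le, mul_one]

lemma cFun_ne_zero {s : ℝ} (hs : 0 ≤ s) : cFun s ≠ 0 := by
  intro h
  have := abs_cFun hs
  rw [h, norm_zero] at this
  exact (mu_pos hs).ne this.symm.symm
  -- fix

lemma Qinv_mem {t : ℝ} (ht0 : 0 ≤ t) (ht1 : t ≤ 1) : 0 ≤ Qinv t ∧ Qinv t ≤ 1 := by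
  have hd := qdenom_pos ht1
  constructor
  · exact div_nonneg ht0 hd.le
  · rw [Qinv, div_le_one hd]
    nlinarith [exp_two_gt_one]

lemma R_mem {s : ℝ} (hs0 : 0 ≤ s) (hs1 : s ≤ 1) : 0 ≤ s * mu s ∧ s * mu s ≤ 1 := by
  have hd := denom_pos hs0
  have hm := mu_pos hs0
  constructor
  · positivity
  · rw [mu, mul_div_assoc', div_le_one hd]
    nlinarith [exp_two_gt_one]

lemma Qinv_R {s : ℝ} (hs0 : 0 ≤ s) : Qinv (s * mu s) = s := by
  have hd := denom_pos hs0
  have hE := Real.exp_pos 2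
  rw [Qinv, mu]
  rw [show Real.exp 2 - (Real.exp 2 - 1) * (s * (Real.exp 2 / ((Real.exp 2 - 1) * s + 1)))
      = Real.exp 2 / ((Real.exp 2 - 1) * s + 1) from by field_simp; ring]
  exact mul_div_cancel_right₀ s (div_ne_zero hE.ne' hd.ne')

lemma R_Qinv {t : ℝ} (ht0 : 0 ≤ t) (ht1 : t ≤ 1) : Qinv t * mu (Qinv t) = t := by
  have hq := Qinv_mem ht0 ht1
  have hd := denom_pos hq.1
  have hqd := qdenom_pos ht1
  rw [mu, Qinv] at *
  have hqd' : Real.exp 2 - t * (Real.exp 2 - 1) ≠ 0 := by nlinarith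
  field_simp
  ring

lemma fMap_eq {z : ℂ} (hz : ‖z‖ ≤ 1) :
    fMap z = z * cFun (‖z‖) := by
  rcases eq_or_ne (‖z‖) 0 with h0 | h0
  · have hz0 : z = 0 := by simpa using norm_eq_zero.1 h0
    simp [fMap, hz0]
  rcases eq_or_ne (‖z‖) 1 with h1 | h1
  · rw [fMap, if_pos (Or.inr h1), h1]
    have hxi : xi ((1:ℝ) / (1 - 1)) = 0 := by
      norm_num [xi]
    have hmu : mu 1 = 1 := by
      rw [mu]
      field_simp
      ring
    rw [cFun, hxi, hmu]
    simp
  · rw [fMap, if_neg (by tauto), cFun]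
    have ha0 : 0 < ‖z‖ := lt_of_le_of_ne (norm_nonneg z) (Ne.symm h0)
    have hd : (Real.exp 2 - 1) * ‖z‖ + 1 ≠ 0 := (denom_pos ha0.le).ne'
    have hd2 : (Real.exp 2 * ‖z‖ - ‖z‖ + 1 : ℝ) =
        (Real.exp 2 - 1) * ‖z‖ + 1 := by ring
    rw [hd2, mu]
    push_cast
    have hdc : ((Real.exp 2 - 1) * (‖z‖ : ℂ) + 1) ≠ 0 := by
      exact_mod_cast Complex.ofReal_ne_zero.2 hd
    field_simp

lemma abs_mul_cFun {z : ℂ} : ‖z * cFun (‖z‖)‖ =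
    ‖z‖ * mu (‖z‖) := by
  rw [norm_mul, abs_cFun (norm_nonneg z)]

lemma abs_div_cFun {w : ℂ} (hw : ‖w‖ ≤ 1) :
    ‖w / cFun (Qinv ‖w‖)‖ = Qinv ‖w‖ := by
  have ht0 := norm_nonneg w
  have hq := Qinv_mem ht0 hw
  rw [norm_div, abs_cFun hq.1]
  rw [eq_comm, eq_div_iff (mu_pos hq.1).ne']
  exact R_Qinv ht0 hw

noncomputable def fEquiv : {z : ℂ // ‖z‖ ≤ 1} ≃ {z : ℂ // ‖z‖ ≤ 1} where
  toFun z := ⟨(z:ℂ) * cFun (‖(z:ℂ)‖), by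
    rw [abs_mul_cFun]
    exact (R_mem (norm_nonneg _) z.2).2⟩
  invFun w := ⟨(w:ℂ) / cFun (Qinv (‖(w:ℂ)‖)), by
    rw [abs_div_cFun w.2]
    exact (Qinv_mem (norm_nonneg _) w.2).2⟩
  left_inv z := by
    apply Subtype.ext
    simp only
    rw [abs_mul_cFun, Qinv_R (norm_nonneg (z:ℂ))]
    exact mul_div_cancel_right₀ _ (cFun_ne_zero (norm_nonneg (z:ℂ)))
  right_inv w := by
    apply Subtype.ext
    simp only
    rw [abs_div_cFun w.2]
    exact div_mul_cancel₀ _ (cFun_ne_zero (Qinv_mem (norm_nonneg (w:ℂ)) w.2).1)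

lemma mu_contOn : ContinuousOn mu (Set.Icc 0 1) := by
  apply ContinuousOn.div continuousOn_const (by fun_prop)
  intro s hs
  exact (denom_pos hs.1).ne'

lemma cFun_contOn : ContinuousOn cFun (Set.Icc 0 1) := by
  apply ContinuousOn.mul
  · exact Complex.continuous_ofReal.comp_continuousOn mu_contOn
  · apply Complex.continuous_exp.comp_continuousOn
    have : ContinuousOn (fun s : ℝ => ((psi s : ℝ) : ℂ)) (Set.Icc 0 1) :=
      Complex.continuous_ofReal.comp_continuousOn psi_contOn
    exact ContinuousOn.mul continuousOn_const this

lemma fEquiv_cont : Continuous (fEquiv : {z : ℂ // ‖z‖ ≤ 1} → {z : ℂ // ‖z‖ ≤ 1}) := by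
  apply Continuous.subtype_mk
  apply Continuous.mul continuous_subtype_val
  apply ContinuousOn.comp_continuous cFun_contOn
    (continuous_norm.comp continuous_subtype_val)
  intro z
  exact ⟨norm_nonneg _, z.2⟩

instance : CompactSpace {z : ℂ // ‖z‖ ≤ 1} := by
  have h : IsCompact {z : ℂ | ‖z‖ ≤ 1} := by
    have he : {z : ℂ | ‖z‖ ≤ 1} = Metric.closedBall 0 1 := by
      ext z
      simp [Complex.dist_eq]
    rw [he]
    exact isCompact_closedBall 0 1
  exact isCompact_iff_compactSpace.mp h

theorem fMap_homeomorph_closedDisk :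
    ∃ F : Homeomorph {z : ℂ // ‖z‖ ≤ 1} {z : ℂ // ‖z‖ ≤ 1},
      ∀ z : {z : ℂ // ‖z‖ ≤ 1}, (F z : ℂ) = fMap (z : ℂ) := by
  refine ⟨fEquiv_cont.homeoOfEquivCompactToT2, fun z => ?_⟩
  rw [fMap_eq z.2]
  rfl
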